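/- The map δ restricts to a bijection from the hyperoctahedral group B_n (signed permutations of {±1,...,±n}) to the set of centrally symmetric noncrossing arc diagrams on 2n points. -/

import Mathlib

/-- A (combinatorial, type-A) arc on the points of `Fin n`: endpoints `p < q`
together with the set `R` of interior points passed on the right. -/
structure Arc (n : ℕ) where
  p : Fin n
  q : Fin n
  R : Finset (Fin n)
  hpq : p < q
  hR : ∀ i ∈ R, p < i ∧ i < q

namespace Arc

variable {n : ℕ}

/-- The side of the arc `α` at a point `i` of its closed interval:
`0` at endpoints, `1` if `i` is right of `α`, `-1` if left. -/
def sgn (α : Arc n) (i : Fin n) : ℤ :=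
  if i = α.p ∨ i = α.q then 0 else if i ∈ α.R then 1 else -1

/-- Two arcs cross if their relative horizontal order flips somewhere on the
intersection of their closed intervals of points. -/
def Crosses (α β : Arc n) : Prop :=
  ∃ i j : Fin n, max α.p β.p ≤ i ∧ i < j ∧ j ≤ min α.q β.q ∧
    (sgn α i - sgn β i) * (sgn α j - sgn β j) < 0

/-- Two arcs are compatible if they do not share an upper endpoint, do not share
a lower endpoint, and do not cross. -/
def Compatible (α β : Arc n) : Prop :=
  α.p ≠ β.p ∧ α.q ≠ β.q ∧ ¬ Crosses α β

end Arc

/-- A noncrossing arc diagram: a set of pairwise compatible arcs. -/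
def IsNCAD {n : ℕ} (D : Set (Arc n)) : Prop :=
  ∀ α ∈ D, ∀ β ∈ D, α ≠ β → Arc.Compatible α β

/-- The arc diagram `δ(π)` of a permutation `π`: one arc per descent, with
lower endpoint `π (i+1)`, upper endpoint `π i`, passing right of exactly the
intermediate values occurring after position `i`. -/
def diagram {n : ℕ} (π : Equiv.Perm (Fin n)) : Set (Arc n) :=
  {α | ∃ (i : Fin n) (h : (i : ℕ) + 1 < n),
     π ⟨(i : ℕ) + 1, h⟩ < π i ∧ α.p = π ⟨(i : ℕ) + 1, h⟩ ∧ α.q = π i ∧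
     ∀ x : Fin n, x ∈ α.R ↔ ∃ j : Fin n, i < j ∧ π j = x ∧ α.p < x ∧ x < α.q}

/-- `α` is the image of the arc `β` under the half turn (central symmetry). -/
def IsHalfTurn {n : ℕ} (β α : Arc n) : Prop :=
  α.p = β.q.rev ∧ α.q = β.p.rev ∧
    ∀ x : Fin n, x ∈ α.R ↔ (β.p < x.rev ∧ x.rev < β.q ∧ x.rev ∉ β.R)

/-- A diagram is centrally symmetric if it is fixed by the half turn. -/
def CentSym {n : ℕ} (D : Set (Arc n)) : Prop :=
  ∀ α : Arc n, α ∈ D ↔ ∃ β ∈ D, IsHalfTurn β α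

namespace Arc

theorem ext' {n} {α β : Arc n} (hp : α.p = β.p) (hq : α.q = β.q) (hR : α.R = β.R) :
    α = β := by cases α; cases β; simp_all

theorem sgn_mem_Icc (α : Arc n) (x : Fin n) : α.sgn x ∈ Set.Icc (-1 : ℤ) 1 := by
  unfold sgn; split <;> [skip; split] <;> simp

theorem sgn_pos_iff {α : Arc n} {x : Fin n} :
    α.sgn x = 1 ↔ (¬ (x = α.p ∨ x = α.q) ∧ x ∈ α.R) := by
  unfold sgn; split <;> [simp_all; split <;> simp_all]

theorem sgn_eq_neg_one {α : Arc n} {x : Fin n} (h1 : ¬ (x = α.p ∨ x = α.q))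
    (h2 : x ∉ α.R) : α.sgn x = -1 := by unfold sgn; split <;> simp_all

theorem sgn_eq_zero {α : Arc n} {x : Fin n} (h1 : x = α.p ∨ x = α.q) :
    α.sgn x = 0 := by unfold sgn; split <;> simp_all

theorem sgn_eq_one {α : Arc n} {x : Fin n} (h2 : x ∈ α.R) : α.sgn x = 1 := by
  have hb := α.hR x h2
  have hne : ¬ (x = α.p ∨ x = α.q) := by
    rintro (rfl | rfl)
    · exact lt_irrefl _ hb.1
    · exact lt_irrefl _ hb.2
  unfold sgn; rw [if_neg hne, if_pos h2]

end Arc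

section DiagramBasic
variable {n : ℕ} {π : Equiv.Perm (Fin n)}

/-- membership in R in terms of position `π.symm x`. -/
theorem memR_iff {α : Arc n} {i : Fin n}
    (hiff : ∀ x : Fin n, x ∈ α.R ↔ ∃ j : Fin n, i < j ∧ π j = x ∧ α.p < x ∧ x < α.q)
    (x : Fin n) : x ∈ α.R ↔ (i < π.symm x ∧ α.p < x ∧ x < α.q) := by
  rw [hiff]
  constructor
  · rintro ⟨j, hj, rfl, h⟩; simpa [Equiv.symm_apply_apply] using ⟨hj, h⟩
  · rintro ⟨h1, h2⟩; exact ⟨π.symm x, h1, by simp, h2⟩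

/-- Key monotonicity: arcs from earlier descents have larger sgn on overlap. -/
theorem sgn_mono {α β : Arc n} {i j : Fin n}
    (hi : (i : ℕ) + 1 < n) (hj : (j : ℕ) + 1 < n)
    (hdi : π ⟨(i : ℕ) + 1, hi⟩ < π i) (hdj : π ⟨(j : ℕ) + 1, hj⟩ < π j)
    (hpi : α.p = π ⟨(i : ℕ) + 1, hi⟩) (hqi : α.q = π i)
    (hpj : β.p = π ⟨(j : ℕ) + 1, hj⟩) (hqj : β.q = π j)
    (hRi : ∀ x : Fin n, x ∈ α.R ↔ ∃ k : Fin n, i < k ∧ π k = x ∧ α.p < x ∧ x < α.q)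
    (hRj : ∀ x : Fin n, x ∈ β.R ↔ ∃ k : Fin n, j < k ∧ π k = x ∧ β.p < x ∧ x < β.q)
    (hij : i < j) (x : Fin n)
    (hx1 : α.p ≤ x) (hx2 : β.p ≤ x) (hx3 : x ≤ α.q) (hx4 : x ≤ β.q) :
    β.sgn x ≤ α.sgn x := by
  have hRi' := memR_iff hRi
  have hRj' := memR_iff hRj
  have hsa : π.symm α.q = i := by rw [hqi]; simp
  have hsb : π.symm β.q = j := by rw [hqj]; simp
  have hsa' : π.symm α.p = ⟨(i : ℕ) + 1, hi⟩ := by rw [hpi]; simp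
  have hsb' : π.symm β.p = ⟨(j : ℕ) + 1, hj⟩ := by rw [hpj]; simp
  have hxa : x = α.q ↔ π.symm x = i := by
    rw [← hsa]; exact (EmbeddingLike.apply_eq_iff_eq π.symm).symm
  have hxap : x = α.p ↔ ((π.symm x : Fin n) : ℕ) = (i : ℕ) + 1 := by
    constructor
    · rintro rfl; rw [hsa']
    · intro h
      have h2 : π.symm x = π.symm α.p := by rw [hsa']; exact Fin.ext h
      exact π.symm.injective h2
  have hxb : x = β.q ↔ π.symm x = j := by
    rw [← hsb]; exact (EmbeddingLike.apply_eq_iff_eq π.symm).symm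
  have hxbp : x = β.p ↔ ((π.symm x : Fin n) : ℕ) = (j : ℕ) + 1 := by
    constructor
    · rintro rfl; rw [hsb']
    · intro h
      have h2 : π.symm x = π.symm β.p := by rw [hsb']; exact Fin.ext h
      exact π.symm.injective h2
  by_cases hb : x = β.p ∨ x = β.q
  · -- sgn β x = 0; show sgn α x ≥ 0
    rw [Arc.sgn_eq_zero hb]
    by_cases ha : x = α.p ∨ x = α.q
    · rw [Arc.sgn_eq_zero ha]
    · have h1 : α.p < x := lt_of_le_of_ne hx1 (fun h => ha (Or.inl h.symm))
      have h3 : x < α.q := lt_of_le_of_ne hx3 (fun h => ha (Or.inr h))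
      have hti : (i : ℕ) < ((π.symm x : Fin n) : ℕ) := by
        rcases hb with h | h
        · have := hxbp.1 h
          have := hij
          rw [Fin.lt_iff_val_lt_val] at this
          omega
        · have := hxb.1 h
          have := hij
          rw [Fin.lt_iff_val_lt_val] at this
          omega
      have : x ∈ α.R := (hRi' x).2 ⟨Fin.lt_iff_val_lt_val.2 hti, h1, h3⟩
      rw [Arc.sgn_eq_one this]; norm_num
  · have h1 : β.p < x := lt_of_le_of_ne hx2 (fun h => hb (Or.inl h.symm))
    have h3 : x < β.q := lt_of_le_of_ne hx4 (fun h => hb (Or.inr h))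
    by_cases hr : x ∈ β.R
    · have htj : j < π.symm x := ((hRj' x).1 hr).1
      have hti : (i:ℕ)+1 < ((π.symm x : Fin n):ℕ) := by
        have h := Fin.lt_iff_val_lt_val.1 htj
        have h2 := Fin.lt_iff_val_lt_val.1 hij
        omega
      have ha : ¬ (x = α.p ∨ x = α.q) := by
        rintro (h | h)
        · rw [hxap] at h; omega
        · rw [hxa] at h; rw [h] at htj; exact absurd (Fin.lt_iff_val_lt_val.1 htj) (by omega)
      have h1' : α.p < x := lt_of_le_of_ne hx1 (fun h => ha (Or.inl h.symm))
      have h3' : x < α.q := lt_of_le_of_ne hx3 (fun h => ha (Or.inr h))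
      have : x ∈ α.R := (hRi' x).2 ⟨by rw [Fin.lt_iff_val_lt_val]; omega, h1', h3'⟩
      rw [Arc.sgn_eq_one this, Arc.sgn_eq_one hr]
    · rw [Arc.sgn_eq_neg_one hb hr]
      exact (α.sgn_mem_Icc x).1

theorem crosses_symm {α β : Arc n} (h : Arc.Crosses α β) : Arc.Crosses β α := by
  obtain ⟨i, j, h1, h2, h3, h4⟩ := h
  exact ⟨i, j, by rwa [max_comm], h2, by rwa [min_comm], by nlinarith⟩

theorem isNCAD_diagram (π : Equiv.Perm (Fin n)) : IsNCAD (diagram π) := by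
  rintro α ⟨i, hi, hdi, hpi, hqi, hRi⟩ β ⟨j, hj, hdj, hpj, hqj, hRj⟩ hne
  have key : ∀ (γ δ : Arc n) (a b : Fin n) (ha : (a:ℕ)+1 < n) (hb : (b:ℕ)+1 < n),
      a < b →
      π ⟨(a : ℕ) + 1, ha⟩ < π a → π ⟨(b : ℕ) + 1, hb⟩ < π b →
      γ.p = π ⟨(a : ℕ) + 1, ha⟩ → γ.q = π a →
      δ.p = π ⟨(b : ℕ) + 1, hb⟩ → δ.q = π b →
      (∀ x : Fin n, x ∈ γ.R ↔ ∃ k : Fin n, a < k ∧ π k = x ∧ γ.p < x ∧ x < γ.q) →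
      (∀ x : Fin n, x ∈ δ.R ↔ ∃ k : Fin n, b < k ∧ π k = x ∧ δ.p < x ∧ x < δ.q) →
      ¬ Arc.Crosses γ δ := by
    rintro γ δ a b ha hb hab hda hdb hpa hqa hpb hqb hRa hRb ⟨x, y, hx, hxy, hy, hprod⟩
    have s1 := sgn_mono ha hb hda hdb hpa hqa hpb hqb hRa hRb hab x
      (le_trans (le_max_left _ _) hx) (le_trans (le_max_right _ _) hx)
      (le_trans (le_of_lt hxy) (le_trans hy (min_le_left _ _)))
      (le_trans (le_of_lt hxy) (le_trans hy (min_le_right _ _)))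
    have s2 := sgn_mono ha hb hda hdb hpa hqa hpb hqb hRa hRb hab y
      (le_trans (le_max_left _ _) (le_trans hx (le_of_lt hxy)))
      (le_trans (le_max_right _ _) (le_trans hx (le_of_lt hxy)))
      (le_trans hy (min_le_left _ _)) (le_trans hy (min_le_right _ _))
    nlinarith
  rcases lt_trichotomy i j with hij | rfl | hij
  · refine ⟨?_, ?_, key α β i j hi hj hij hdi hdj hpi hqi hpj hqj hRi hRj⟩
    · rw [hpi, hpj]; intro h
      have := π.injective h
      have : (i:ℕ) + 1 = (j:ℕ) + 1 := congrArg Fin.val this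
      exact absurd (Fin.ext (by omega) : i = j) hij.ne
    · rw [hqi, hqj]; intro h; exact hij.ne (π.injective h)
  · exact absurd (Arc.ext' (hpi.trans hpj.symm) (hqi.trans hqj.symm)
      (Finset.ext fun x => by rw [hRi, hRj, hpi, ← hpj, hqi, ← hqj])) hne
  · refine ⟨?_, ?_, fun hc => key β α j i hj hi hij hdj hdi hpj hqj hpi hqi hRj hRi
      (crosses_symm hc)⟩
    · rw [hpi, hpj]; intro h
      have := π.injective h
      have : (i:ℕ) + 1 = (j:ℕ) + 1 := congrArg Fin.val this
      exact absurd (Fin.ext (by omega) : i = j) hij.ne'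
    · rw [hqi, hqj]; intro h; exact hij.ne' (π.injective h)

end DiagramBasic

section HalfTurn
variable {n : ℕ}

theorem ht_unique {β α₁ α₂ : Arc n} (h1 : IsHalfTurn β α₁) (h2 : IsHalfTurn β α₂) :
    α₁ = α₂ := by
  refine Arc.ext' (h1.1.trans h2.1.symm) (h1.2.1.trans h2.2.1.symm) ?_
  ext x; rw [h1.2.2, h2.2.2]

theorem ht_symm {β α : Arc n} (h : IsHalfTurn β α) : IsHalfTurn α β := by
  obtain ⟨hp, hq, hR⟩ := h
  refine ⟨by rw [hq, Fin.rev_rev], by rw [hp, Fin.rev_rev], fun x => ?_⟩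
  rw [hp, hq]
  constructor
  · intro hx
    have hb := β.hR x hx
    refine ⟨Fin.rev_lt_rev.2 hb.2, Fin.rev_lt_rev.2 hb.1, fun hc => ?_⟩
    rw [hR, Fin.rev_rev] at hc
    exact hc.2.2 hx
  · rintro ⟨h1, h2, h3⟩
    rw [Fin.rev_lt_rev] at h1 h2
    rw [hR, Fin.rev_rev] at h3
    by_contra hx
    exact h3 ⟨h2, h1, hx⟩

theorem conj_apply (π : Equiv.Perm (Fin n)) (x : Fin n) :
    ((Fin.revPerm * π * Fin.revPerm : Equiv.Perm (Fin n))) x = (π x.rev).rev := by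
  simp [Equiv.Perm.mul_apply]

theorem conj_conj (π : Equiv.Perm (Fin n)) :
    Fin.revPerm * (Fin.revPerm * π * Fin.revPerm) * Fin.revPerm = π := by
  ext x
  simp [conj_apply, Equiv.Perm.mul_apply, Fin.rev_rev]

theorem conj_symm_apply (π : Equiv.Perm (Fin n)) (x : Fin n) :
    (Fin.revPerm * π * Fin.revPerm).symm x = (π.symm x.rev).rev := by
  apply (Fin.revPerm * π * Fin.revPerm).injective
  rw [Equiv.apply_symm_apply, conj_apply, Fin.rev_rev, Equiv.apply_symm_apply, Fin.rev_rev]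

open Classical in
/-- The half-turn image of an arc of `diagram π` belongs to `diagram` of the conjugate. -/
theorem ht_mem {π : Equiv.Perm (Fin n)} {β : Arc n} (hβ : β ∈ diagram π) :
    ∃ α ∈ diagram (Fin.revPerm * π * Fin.revPerm), IsHalfTurn β α := by
  obtain ⟨i, hi, hd, hp, hq, hRβ⟩ := hβ
  set σ := Fin.revPerm * π * Fin.revPerm with hσ
  have hin : (i : ℕ) + 2 ≤ n := hi
  set i' : Fin n := ⟨n - (i : ℕ) - 2, by omega⟩ with hi'def
  have hv : (i' : ℕ) = n - (i : ℕ) - 2 := rfl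
  have hi' : (i' : ℕ) + 1 < n := by omega
  have hrev1 : (⟨(i' : ℕ) + 1, hi'⟩ : Fin n) = i.rev := by
    apply Fin.ext; rw [Fin.val_rev]; show (i' : ℕ) + 1 = n - ((i : ℕ) + 1); omega
  have hrev2 : i'.rev = (⟨(i : ℕ) + 1, hi⟩ : Fin n) := by
    apply Fin.ext; rw [Fin.val_rev]; show n - ((i' : ℕ) + 1) = (i : ℕ) + 1; omega
  have hrev3 : i' = (⟨(i : ℕ) + 1, hi⟩ : Fin n).rev := by
    rw [← hrev2, Fin.rev_rev]
  have hσ1 : σ i' = (π ⟨(i : ℕ) + 1, hi⟩).rev := by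
    rw [conj_apply, hrev2]
  have hσ2 : σ ⟨(i' : ℕ) + 1, hi'⟩ = (π i).rev := by
    rw [conj_apply, hrev1, Fin.rev_rev]
  have hd' : σ ⟨(i' : ℕ) + 1, hi'⟩ < σ i' := by
    rw [hσ1, hσ2, Fin.rev_lt_rev]; exact hd
  refine ⟨⟨σ ⟨(i' : ℕ) + 1, hi'⟩, σ i',
      Finset.univ.filter (fun x => i' < σ.symm x ∧ σ ⟨(i' : ℕ) + 1, hi'⟩ < x ∧ x < σ i'),
      hd', fun x hx => by simp only [Finset.mem_filter] at hx; exact ⟨hx.2.2.1, hx.2.2.2⟩⟩,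
    ⟨i', hi', hd', rfl, rfl, fun x => ?_⟩, ?_, ?_, fun x => ?_⟩
  · simp only [Finset.mem_filter, Finset.mem_univ, true_and]
    constructor
    · rintro ⟨h1, h2, h3⟩; exact ⟨σ.symm x, h1, by simp, h2, h3⟩
    · rintro ⟨k, h1, rfl, h2, h3⟩; simpa using ⟨h1, h2, h3⟩
  · show σ ⟨(i' : ℕ) + 1, hi'⟩ = β.q.rev
    rw [hσ2, hq]
  · show σ i' = β.p.rev
    rw [hσ1, hp]
  · simp only [Finset.mem_filter, Finset.mem_univ, true_and]
    have hsx : σ.symm x = (π.symm x.rev).rev := conj_symm_apply π x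
    have hRβ' := memR_iff hRβ
    rw [hσ2, hσ1, hRβ', hp, hq]
    constructor
    · rintro ⟨h1, h2, h3⟩
      rw [hsx, hrev3] at h1
      have ht : π.symm x.rev < (⟨(i : ℕ) + 1, hi⟩ : Fin n) := Fin.rev_lt_rev.1 h1
      have h2' : x.rev < π i := by
        rw [← Fin.rev_rev x] at h2; exact Fin.rev_lt_rev.1 h2
      have h3' : π ⟨(i : ℕ) + 1, hi⟩ < x.rev := by
        rw [← Fin.rev_rev x] at h3; exact Fin.rev_lt_rev.1 h3
      refine ⟨h3', h2', ?_⟩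
      rintro ⟨hlt, -⟩
      have a1 := Fin.lt_iff_val_lt_val.1 hlt
      have a2 := Fin.lt_iff_val_lt_val.1 ht
      simp at a2; omega
    · rintro ⟨h1, h2, h3⟩
      have hnt : ¬ (i < π.symm x.rev) := fun hlt => h3 ⟨hlt, h1, h2⟩
      rw [Fin.lt_iff_val_lt_val, not_lt] at hnt
      refine ⟨?_, ?_, ?_⟩
      · rw [hsx, hrev3]
        exact Fin.rev_lt_rev.2 (Fin.lt_iff_val_lt_val.2 (by simp; omega))
      · have := Fin.rev_lt_rev.2 h2; rwa [Fin.rev_rev] at this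
      · have := Fin.rev_lt_rev.2 h1; rwa [Fin.rev_rev] at this

theorem diagram_conj (π : Equiv.Perm (Fin n)) :
    diagram (Fin.revPerm * π * Fin.revPerm) = {α | ∃ β ∈ diagram π, IsHalfTurn β α} := by
  ext α
  constructor
  · intro hα
    obtain ⟨γ, hγ, hht⟩ := ht_mem hα
    rw [conj_conj] at hγ
    exact ⟨γ, hγ, ht_symm hht⟩
  · rintro ⟨β, hβ, hht⟩
    obtain ⟨γ, hγ, hht'⟩ := ht_mem hβ
    rwa [ht_unique hht hht']

theorem centSym_diagram {π : Equiv.Perm (Fin n)}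
    (hπ : Fin.revPerm * π * Fin.revPerm = π) : CentSym (diagram π) := by
  have h := diagram_conj π
  rw [hπ] at h
  intro α
  exact Set.ext_iff.1 h α

end HalfTurn

section Deletion
variable {m : ℕ}
open Classical in
noncomputable def candSet {n : ℕ} (D : Set (Arc n)) : Finset (Fin n) :=
  Finset.univ.filter
    (fun v => (∀ α ∈ D, α.q ≠ v) ∧ (∀ α ∈ D, α.p < v → v < α.q → v ∈ α.R))

theorem mem_candSet {n : ℕ} {D : Set (Arc n)} {v : Fin n} :
    v ∈ candSet D ↔
      (∀ α ∈ D, α.q ≠ v) ∧ (∀ α ∈ D, α.p < v → v < α.q → v ∈ α.R) := by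
  classical
  simp [candSet]

/-- `v` is the greatest candidate of `D`. -/
def IsGC {n : ℕ} (D : Set (Arc n)) (v : Fin n) : Prop :=
  v ∈ candSet D ∧ ∀ u ∈ candSet D, u ≤ v

theorem IsGC.unique {n : ℕ} {D : Set (Arc n)} {v w : Fin n}
    (hv : IsGC D v) (hw : IsGC D w) : v = w :=
  le_antisymm (hw.2 v hv.1) (hv.2 w hw.1)

theorem zero_mem_candSet (D : Set (Arc (m+1))) : (0 : Fin (m+1)) ∈ candSet D := by
  rw [mem_candSet]
  refine ⟨fun α _ h => ?_, fun α _ h _ => absurd h (Fin.not_lt_zero _)⟩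
  have := α.hpq
  rw [h] at this
  exact absurd this (Fin.not_lt_zero _)

theorem exists_isGC (D : Set (Arc (m+1))) : ∃ v, IsGC D v :=
  ⟨(candSet D).max' ⟨0, zero_mem_candSet D⟩,
    (candSet D).max'_mem _, fun u hu => Finset.le_max' _ u hu⟩

def liftArc (v0 : Fin (m+1)) (α : Arc m) : Arc (m+1) where
  p := v0.succAbove α.p
  q := v0.succAbove α.q
  R := (α.R.map ⟨v0.succAbove, Fin.succAbove_right_injective⟩) ∪
       (if v0.succAbove α.p < v0 ∧ v0 < v0.succAbove α.q then {v0} else ∅)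
  hpq := Fin.succAbove_lt_succAbove_iff.2 α.hpq
  hR := by
    intro x hx
    rw [Finset.mem_union] at hx
    rcases hx with hx | hx
    · rw [Finset.mem_map] at hx
      obtain ⟨y, hy, rfl⟩ := hx
      have := α.hR y hy
      exact ⟨Fin.succAbove_lt_succAbove_iff.2 this.1,
        Fin.succAbove_lt_succAbove_iff.2 this.2⟩
    · split at hx
      · rw [Finset.mem_singleton] at hx; subst hx; assumption
      · simp at hx

@[simp] theorem liftArc_p (v0 : Fin (m+1)) (α : Arc m) :
    (liftArc v0 α).p = v0.succAbove α.p := rfl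
@[simp] theorem liftArc_q (v0 : Fin (m+1)) (α : Arc m) :
    (liftArc v0 α).q = v0.succAbove α.q := rfl

theorem succAbove_mem_liftR {v0 : Fin (m+1)} {α : Arc m} {y : Fin m} :
    v0.succAbove y ∈ (liftArc v0 α).R ↔ y ∈ α.R := by
  constructor
  · intro h
    rw [liftArc, Finset.mem_union] at h
    rcases h with h | h
    · rw [Finset.mem_map] at h
      obtain ⟨z, hz, hzz⟩ := h
      have : z = y := Fin.succAbove_right_injective hzz
      subst this; exact hz
    · split at h
      · rw [Finset.mem_singleton] at h
        exact absurd h (Fin.succAbove_ne v0 y)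
      · simp at h
  · intro h
    rw [liftArc, Finset.mem_union]
    exact Or.inl (Finset.mem_map.2 ⟨y, h, rfl⟩)

theorem v0_mem_liftR {v0 : Fin (m+1)} {α : Arc m} :
    v0 ∈ (liftArc v0 α).R ↔ (v0.succAbove α.p < v0 ∧ v0 < v0.succAbove α.q) := by
  constructor
  · intro h
    rw [liftArc, Finset.mem_union] at h
    rcases h with h | h
    · rw [Finset.mem_map] at h
      obtain ⟨z, _, hzz⟩ := h
      exact absurd hzz (Fin.succAbove_ne v0 z)
    · split at h
      · assumption
      · simp at h
  · intro h
    rw [liftArc, Finset.mem_union, if_pos h]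
    exact Or.inr (Finset.mem_singleton_self v0)

theorem liftArc_injective (v0 : Fin (m+1)) : Function.Injective (liftArc v0) := by
  intro a b h
  have hp : v0.succAbove a.p = v0.succAbove b.p := congrArg Arc.p h
  have hq : v0.succAbove a.q = v0.succAbove b.q := congrArg Arc.q h
  refine Arc.ext' (Fin.succAbove_right_injective hp)
    (Fin.succAbove_right_injective hq) (Finset.ext fun y => ?_)
  rw [← succAbove_mem_liftR (v0 := v0) (α := a), ← succAbove_mem_liftR (v0 := v0) (α := b), h]

theorem sgn_liftArc (v0 : Fin (m+1)) (α : Arc m) (y : Fin m) :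
    (liftArc v0 α).sgn (v0.succAbove y) = α.sgn y := by
  unfold Arc.sgn
  have he : (v0.succAbove y = (liftArc v0 α).p ∨ v0.succAbove y = (liftArc v0 α).q) ↔
      (y = α.p ∨ y = α.q) := by
    rw [liftArc_p, liftArc_q]
    constructor
    · rintro (h | h)
      · exact Or.inl (Fin.succAbove_right_injective h)
      · exact Or.inr (Fin.succAbove_right_injective h)
    · rintro (rfl | rfl)
      · exact Or.inl rfl
      · exact Or.inr rfl
  by_cases h : y = α.p ∨ y = α.q
  · rw [if_pos (he.2 h), if_pos h]
  · rw [if_neg (fun hc => h (he.1 hc)), if_neg h]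
    by_cases h2 : y ∈ α.R
    · rw [if_pos (succAbove_mem_liftR.2 h2), if_pos h2]
    · rw [if_neg (fun hc => h2 (succAbove_mem_liftR.1 hc)), if_neg h2]

theorem crosses_liftArc {v0 : Fin (m+1)} {α β : Arc m}
    (h : Arc.Crosses α β) : Arc.Crosses (liftArc v0 α) (liftArc v0 β) := by
  obtain ⟨i, j, h1, h2, h3, h4⟩ := h
  refine ⟨v0.succAbove i, v0.succAbove j, ?_, ?_, ?_, ?_⟩
  · rw [liftArc_p, liftArc_p]
    exact max_le (Fin.succAbove_le_succAbove_iff.2 ((le_max_left _ _).trans h1))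
      (Fin.succAbove_le_succAbove_iff.2 ((le_max_right _ _).trans h1))
  · exact Fin.succAbove_lt_succAbove_iff.2 h2
  · rw [liftArc_q, liftArc_q]
    exact le_min (Fin.succAbove_le_succAbove_iff.2 (h3.trans (min_le_left _ _)))
      (Fin.succAbove_le_succAbove_iff.2 (h3.trans (min_le_right _ _)))
  · rwa [sgn_liftArc, sgn_liftArc, sgn_liftArc, sgn_liftArc]

open Classical in
noncomputable def dropArc (v0 : Fin (m+1)) (α : Arc (m+1)) (hp : α.p ≠ v0)
    (hq : α.q ≠ v0) : Arc m where
  p := Classical.choose (Fin.exists_succAbove_eq hp)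
  q := Classical.choose (Fin.exists_succAbove_eq hq)
  R := Finset.univ.filter (fun y => v0.succAbove y ∈ α.R)
  hpq := by
    have h1 := Classical.choose_spec (Fin.exists_succAbove_eq hp)
    have h2 := Classical.choose_spec (Fin.exists_succAbove_eq hq)
    rw [← Fin.succAbove_lt_succAbove_iff (p := v0), h1, h2]
    exact α.hpq
  hR := by
    intro y hy
    rw [Finset.mem_filter] at hy
    have hb := α.hR _ hy.2
    have h1 := Classical.choose_spec (Fin.exists_succAbove_eq hp)
    have h2 := Classical.choose_spec (Fin.exists_succAbove_eq hq)
    constructor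
    · rw [← Fin.succAbove_lt_succAbove_iff (p := v0), h1]; exact hb.1
    · rw [← Fin.succAbove_lt_succAbove_iff (p := v0), h2]; exact hb.2

theorem dropArc_p (v0 : Fin (m+1)) (α : Arc (m+1)) (hp : α.p ≠ v0) (hq : α.q ≠ v0) :
    v0.succAbove (dropArc v0 α hp hq).p = α.p :=
  Classical.choose_spec (Fin.exists_succAbove_eq hp)

theorem dropArc_q (v0 : Fin (m+1)) (α : Arc (m+1)) (hp : α.p ≠ v0) (hq : α.q ≠ v0) :
    v0.succAbove (dropArc v0 α hp hq).q = α.q :=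
  Classical.choose_spec (Fin.exists_succAbove_eq hq)

theorem mem_dropArc {v0 : Fin (m+1)} {α : Arc (m+1)} {hp : α.p ≠ v0} {hq : α.q ≠ v0}
    {y : Fin m} : y ∈ (dropArc v0 α hp hq).R ↔ v0.succAbove y ∈ α.R := by
  rw [dropArc, Finset.mem_filter]
  simp

theorem liftArc_dropArc {v0 : Fin (m+1)} {α : Arc (m+1)} (hp : α.p ≠ v0) (hq : α.q ≠ v0)
    (hmem : v0 ∈ α.R ↔ (α.p < v0 ∧ v0 < α.q)) :
    liftArc v0 (dropArc v0 α hp hq) = α := by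
  refine Arc.ext' (by rw [liftArc_p, dropArc_p]) (by rw [liftArc_q, dropArc_q])
    (Finset.ext fun x => ?_)
  by_cases hx : x = v0
  · subst hx
    rw [v0_mem_liftR, dropArc_p, dropArc_q, hmem]
  · obtain ⟨y, rfl⟩ := Fin.exists_succAbove_eq hx
    rw [succAbove_mem_liftR, mem_dropArc]

def extPerm (v0 : Fin (m+1)) (π' : Equiv.Perm (Fin m)) : Equiv.Perm (Fin (m+1)) :=
  (finSuccEquiv' (Fin.last m)).trans ((Equiv.optionCongr π').trans (finSuccEquiv' v0).symm)

@[simp] theorem extPerm_last (v0 : Fin (m+1)) (π' : Equiv.Perm (Fin m)) :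
    extPerm v0 π' (Fin.last m) = v0 := by
  simp [extPerm, finSuccEquiv'_at]

@[simp] theorem extPerm_castSucc (v0 : Fin (m+1)) (π' : Equiv.Perm (Fin m)) (k : Fin m) :
    extPerm v0 π' k.castSucc = v0.succAbove (π' k) := by
  have h : k.castSucc = (Fin.last m).succAbove k := by rw [Fin.succAbove_last]
  rw [extPerm]
  simp only [Equiv.trans_apply, Equiv.optionCongr_apply]
  rw [h, finSuccEquiv'_succAbove]
  simp [finSuccEquiv'_symm_some]

theorem exists_extPerm (π : Equiv.Perm (Fin (m+1))) :
    ∃ π' : Equiv.Perm (Fin m), π = extPerm (π (Fin.last m)) π' := by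
  set v0 := π (Fin.last m) with hv0
  set E : Option (Fin m) ≃ Option (Fin m) :=
    ((finSuccEquiv' (Fin.last m)).symm.trans π).trans (finSuccEquiv' v0) with hE
  have hnone : E none = none := by
    simp [hE, finSuccEquiv'_at]
    exact hv0
  refine ⟨E.removeNone, Equiv.ext fun x => ?_⟩
  refine Fin.lastCases ?_ (fun k => ?_) x
  · rw [extPerm_last]
  · rw [extPerm_castSucc]
    have hsome : E (some k) = some (E.removeNone k) := by
      rcases h2 : E (some k) with _ | b
      · have := E.injective (hnone.trans h2.symm); simp at this
      · rw [Equiv.removeNone_some _ ⟨b, h2⟩]; exact h2.symm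
    have hEk : E (some k) = finSuccEquiv' v0 (π k.castSucc) := by
      simp [hE, Fin.succAbove_last, finSuccEquiv'_symm_some]
    rw [hEk] at hsome
    have := congrArg (finSuccEquiv' v0).symm hsome
    rw [Equiv.symm_apply_apply, finSuccEquiv'_symm_some] at this
    exact this

end Deletion

section ExtDiagram
variable {m : ℕ} (v0 : Fin (m+1)) (π' : Equiv.Perm (Fin m))

theorem extPerm_eq_v0_iff {j : Fin (m+1)} : extPerm v0 π' j = v0 ↔ j = Fin.last m := by
  constructor
  · intro h
    exact (extPerm v0 π').injective (h.trans (extPerm_last v0 π').symm)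
  · rintro rfl; exact extPerm_last v0 π'

theorem cases_last_or_castSucc (j : Fin (m+1)) : j = Fin.last m ∨ ∃ k : Fin m, j = k.castSucc := by
  refine Fin.lastCases ?_ (fun k => ?_) j
  · exact Or.inl rfl
  · exact Or.inr ⟨k, rfl⟩

theorem lift_mem_diagram {α' : Arc m} (h : α' ∈ diagram π') :
    liftArc v0 α' ∈ diagram (extPerm v0 π') := by
  obtain ⟨i, hi, hd, hp, hq, hR⟩ := h
  have hii : ((i.castSucc : Fin (m+1)) : ℕ) + 1 < m + 1 := by
    simp only [Fin.coe_castSucc]; omega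
  have e1 : (⟨((i.castSucc : Fin (m+1)) : ℕ) + 1, hii⟩ : Fin (m+1)) =
      ((⟨(i : ℕ) + 1, hi⟩ : Fin m)).castSucc := by
    apply Fin.ext; simp
  refine ⟨i.castSucc, hii, ?_, ?_, ?_, ?_⟩
  · rw [e1, extPerm_castSucc, extPerm_castSucc]
    exact Fin.succAbove_lt_succAbove_iff.2 hd
  · rw [e1, extPerm_castSucc, liftArc_p, hp]
  · rw [extPerm_castSucc, liftArc_q, hq]
  · intro x
    by_cases hx : x = v0
    · rw [hx, v0_mem_liftR]
      constructor
      · rintro ⟨h1, h2⟩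
        exact ⟨Fin.last m, Fin.castSucc_lt_last i, extPerm_last v0 π', h1, h2⟩
      · rintro ⟨j, hj1, hj2, hj3, hj4⟩
        exact ⟨hj3, hj4⟩
    · obtain ⟨y, rfl⟩ := Fin.exists_succAbove_eq hx
      rw [succAbove_mem_liftR, hR y]
      constructor
      · rintro ⟨k, hk1, hk2, hk3, hk4⟩
        exact ⟨k.castSucc, Fin.castSucc_lt_castSucc_iff.2 hk1,
          by rw [extPerm_castSucc, hk2],
          Fin.succAbove_lt_succAbove_iff.2 hk3, Fin.succAbove_lt_succAbove_iff.2 hk4⟩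
      · rintro ⟨j, hj1, hj2, hj3, hj4⟩
        rcases cases_last_or_castSucc j with rfl | ⟨k, rfl⟩
        · rw [extPerm_last] at hj2
          exact absurd hj2.symm (Fin.succAbove_ne v0 y)
        · rw [extPerm_castSucc] at hj2
          refine ⟨k, Fin.castSucc_lt_castSucc_iff.1 hj1,
            Fin.succAbove_right_injective hj2, ?_, ?_⟩
          · rw [← Fin.succAbove_lt_succAbove_iff (p := v0)]; exact hj3
          · rw [← Fin.succAbove_lt_succAbove_iff (p := v0)]; exact hj4

theorem lastArc_mem_diagram (k : Fin m) (hk : (k : ℕ) + 1 = m)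
    (hd : v0 < v0.succAbove (π' k)) :
    (⟨v0, v0.succAbove (π' k), ∅, hd, by simp⟩ : Arc (m+1)) ∈ diagram (extPerm v0 π') := by
  have hii : ((k.castSucc : Fin (m+1)) : ℕ) + 1 < m + 1 := by
    simp only [Fin.coe_castSucc]; omega
  have e1 : (⟨((k.castSucc : Fin (m+1)) : ℕ) + 1, hii⟩ : Fin (m+1)) = Fin.last m := by
    apply Fin.ext; simp [hk]
  have hlt : ∀ j : Fin (m+1), k.castSucc < j → j = Fin.last m := by
    intro j hj
    apply Fin.ext
    have h1 : (k : ℕ) < (j : ℕ) := hj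
    have h2 : (j : ℕ) < m + 1 := j.isLt
    simp only [Fin.val_last]; omega
  refine ⟨k.castSucc, hii, ?_, ?_, ?_, ?_⟩
  · rw [e1, extPerm_last, extPerm_castSucc]; exact hd
  · rw [e1, extPerm_last]
  · rw [extPerm_castSucc]
  · intro x
    simp only [Finset.notMem_empty, false_iff]
    rintro ⟨j, hj1, hj2, hj3, hj4⟩
    rw [hlt j hj1, extPerm_last] at hj2
    subst hj2
    exact absurd hj3 (lt_irrefl _)

theorem mem_diagram_ext {α : Arc (m+1)} (h : α ∈ diagram (extPerm v0 π')) :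
    (∃ α' ∈ diagram π', α = liftArc v0 α') ∨
    (∃ k : Fin m, (k : ℕ) + 1 = m ∧ v0 < v0.succAbove (π' k) ∧
      α.p = v0 ∧ α.q = v0.succAbove (π' k) ∧ α.R = ∅) := by
  obtain ⟨i, hi, hd, hp, hq, hR⟩ := h
  have him : (i : ℕ) < m := by omega
  set i'' : Fin m := ⟨(i : ℕ), him⟩ with hi''
  have hics : i''.castSucc = i := Fin.ext rfl
  have hσi : extPerm v0 π' i = v0.succAbove (π' i'') := by
    rw [← hics, extPerm_castSucc]
  by_cases hA : (i : ℕ) + 1 < m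
  · left
    set j'' : Fin m := ⟨(i : ℕ) + 1, hA⟩ with hj''
    have e1 : (⟨(i : ℕ) + 1, hi⟩ : Fin (m+1)) = j''.castSucc := Fin.ext rfl
    have hσj : extPerm v0 π' ⟨(i : ℕ) + 1, hi⟩ = v0.succAbove (π' j'') := by
      rw [e1, extPerm_castSucc]
    have hd' : π' j'' < π' i'' := by
      rw [← Fin.succAbove_lt_succAbove_iff (p := v0), ← hσj, ← hσi]; exact hd
    have hpj : α.p = v0.succAbove (π' j'') := by rw [hp, hσj]
    have hqi : α.q = v0.succAbove (π' i'') := by rw [hq, hσi]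
    have hv0mem : v0 ∈ α.R ↔ (α.p < v0 ∧ v0 < α.q) := by
      rw [hR v0]
      constructor
      · rintro ⟨j, hj1, hj2, hj3, hj4⟩; exact ⟨hj3, hj4⟩
      · rintro ⟨h1, h2⟩
        refine ⟨Fin.last m, ?_, extPerm_last v0 π', h1, h2⟩
        rw [← hics]; exact Fin.castSucc_lt_last i''
    have hpne : α.p ≠ v0 := by rw [hpj]; exact Fin.succAbove_ne v0 _
    have hqne : α.q ≠ v0 := by rw [hqi]; exact Fin.succAbove_ne v0 _
    refine ⟨dropArc v0 α hpne hqne, ⟨i'', hA, ?_, ?_, ?_, ?_⟩,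
      (liftArc_dropArc hpne hqne hv0mem).symm⟩
    · show π' ⟨(i'' : ℕ) + 1, hA⟩ < π' i''
      exact hd'
    · apply Fin.succAbove_right_injective (p := v0)
      rw [dropArc_p, hpj]
    · apply Fin.succAbove_right_injective (p := v0)
      rw [dropArc_q, hqi]
    · intro y
      rw [mem_dropArc, hR]
      constructor
      · rintro ⟨j, hj1, hj2, hj3, hj4⟩
        rcases cases_last_or_castSucc j with rfl | ⟨k, rfl⟩
        · rw [extPerm_last] at hj2
          exact absurd hj2.symm (Fin.succAbove_ne v0 y)
        · rw [extPerm_castSucc] at hj2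
          refine ⟨k, ?_, Fin.succAbove_right_injective hj2, ?_, ?_⟩
          · rw [← Fin.castSucc_lt_castSucc_iff, hics]; exact hj1
          · rw [← Fin.succAbove_lt_succAbove_iff (p := v0), dropArc_p]; exact hj3
          · rw [← Fin.succAbove_lt_succAbove_iff (p := v0), dropArc_q]; exact hj4
      · rintro ⟨k, hk1, hk2, hk3, hk4⟩
        refine ⟨k.castSucc, ?_, by rw [extPerm_castSucc, hk2], ?_, ?_⟩
        · rw [← hics]; exact Fin.castSucc_lt_castSucc_iff.2 hk1
        · rw [← dropArc_p v0 α hpne hqne, Fin.succAbove_lt_succAbove_iff]; exact hk3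
        · rw [← dropArc_q v0 α hpne hqne, Fin.succAbove_lt_succAbove_iff]; exact hk4
  · right
    have hk : (i'' : ℕ) + 1 = m := by show (i : ℕ) + 1 = m; omega
    have e1 : (⟨(i : ℕ) + 1, hi⟩ : Fin (m+1)) = Fin.last m := by
      apply Fin.ext; show (i : ℕ) + 1 = ((Fin.last m : Fin (m+1)) : ℕ); rw [Fin.val_last]; omega
    have hσlast : extPerm v0 π' ⟨(i : ℕ) + 1, hi⟩ = v0 := by rw [e1, extPerm_last]
    have hpv : α.p = v0 := by rw [hp, hσlast]
    rw [hσlast, hσi] at hd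
    refine ⟨i'', hk, hd, hpv, by rw [hq, hσi], ?_⟩
    · rw [Finset.eq_empty_iff_forall_notMem]
      intro x hx
      obtain ⟨j, hj1, hj2, hj3, hj4⟩ := (hR x).1 hx
      have hjl : j = Fin.last m := by
        apply Fin.ext
        have h1 : (i : ℕ) < (j : ℕ) := hj1
        have h2 : (j : ℕ) < m + 1 := j.isLt
        simp only [Fin.val_last]; omega
      rw [hjl, extPerm_last] at hj2
      subst hj2
      rw [hpv] at hj3
      exact absurd hj3 (lt_irrefl _)

end ExtDiagram

section GC
variable {m : ℕ}

theorem last_isGC (π : Equiv.Perm (Fin (m+1))) : IsGC (diagram π) (π (Fin.last m)) := by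
  constructor
  · rw [mem_candSet]
    constructor
    · rintro α ⟨i, hi, hd, hp, hq, hR⟩ hcq
      rw [hq] at hcq
      have hil : i = Fin.last m := π.injective hcq
      have := congrArg Fin.val hil
      rw [Fin.val_last] at this
      omega
    · rintro α ⟨i, hi, hd, hp, hq, hR⟩ h1 h2
      rw [hR]
      refine ⟨Fin.last m, ?_, rfl, h1, h2⟩
      exact Fin.lt_iff_val_lt_val.2 (by rw [Fin.val_last]; omega)
  · intro u hu
    by_contra hlt
    push_neg at hlt
    rw [mem_candSet] at hu
    classical
    set k := π.symm u with hk
    set S := Finset.univ.filter (fun j : Fin (m+1) => k ≤ j ∧ u ≤ π j) with hS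
    have hkS : k ∈ S := by
      rw [hS, Finset.mem_filter]
      exact ⟨Finset.mem_univ _, le_refl _, le_of_eq (by rw [hk, Equiv.apply_symm_apply])⟩
    set j := S.max' ⟨k, hkS⟩ with hj
    have hjS := Finset.mem_filter.1 (S.max'_mem ⟨k, hkS⟩)
    obtain ⟨-, hkj, huj⟩ := hjS
    rw [← hj] at hkj huj
    have hjlast : j ≠ Fin.last m := by
      intro h
      rw [h] at huj
      exact absurd (lt_of_lt_of_le hlt huj) (lt_irrefl _)
    have hjv : (j : ℕ) + 1 < m + 1 := by
      have h1 := j.isLt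
      have h2 : (j : ℕ) ≠ m := fun h => hjlast (Fin.ext (h.trans (Fin.val_last m).symm))
      omega
    set j1 : Fin (m+1) := ⟨(j : ℕ) + 1, hjv⟩ with hj1
    have hj1S : j1 ∉ S := by
      intro hmem
      have h := Finset.le_max' S j1 hmem
      rw [← hj] at h
      have h2 := Fin.le_iff_val_le_val.1 h
      have h3 : ((j1 : Fin (m+1)) : ℕ) = (j : ℕ) + 1 := rfl
      omega
    have hπj1 : π j1 < u := by
      by_contra hge
      push_neg at hge
      apply hj1S
      rw [hS, Finset.mem_filter]
      refine ⟨Finset.mem_univ _, le_trans hkj ?_, hge⟩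
      exact le_of_lt (Fin.lt_iff_val_lt_val.2 (by simp [hj1]))
    have hdj : π j1 < π j := lt_of_lt_of_le hπj1 huj
    set α : Arc (m+1) := ⟨π j1, π j,
      Finset.univ.filter (fun x => j < π.symm x ∧ π j1 < x ∧ x < π j), hdj,
      by intro x hx; rw [Finset.mem_filter] at hx; exact ⟨hx.2.2.1, hx.2.2.2⟩⟩ with hα
    have hαmem : α ∈ diagram π := by
      refine ⟨j, hjv, hdj, rfl, rfl, fun x => ?_⟩
      show x ∈ Finset.univ.filter _ ↔ _
      rw [Finset.mem_filter]
      constructor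
      · rintro ⟨-, h1, h2, h3⟩
        exact ⟨π.symm x, h1, by simp, h2, h3⟩
      · rintro ⟨jj, h1, rfl, h2, h3⟩
        exact ⟨Finset.mem_univ _, by simpa using h1, h2, h3⟩
    rcases eq_or_lt_of_le huj with heq | hlt2
    · exact hu.1 α hαmem heq.symm
    · have hmem := hu.2 α hαmem hπj1 hlt2
      show False
      have : j < π.symm u := by
        have := (Finset.mem_filter.1 hmem).2.1
        exact this
      rw [← hk] at this
      exact absurd (lt_of_lt_of_le this hkj) (lt_irrefl j)

theorem cand_of_lift {D : Set (Arc (m+1))} {v0 : Fin (m+1)} (hv0 : v0 ∈ candSet D)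
    {u' : Fin m}
    (hq : ∀ α ∈ D, α.p = v0 → α.q < v0.succAbove u')
    (hu : u' ∈ candSet (liftArc v0 ⁻¹' D)) :
    v0.succAbove u' ∈ candSet D := by
  rw [mem_candSet] at hv0 hu ⊢
  have pull : ∀ α ∈ D, α.p ≠ v0 → ∃ hp hq', liftArc v0 (dropArc v0 α hp hq') = α := by
    intro α hα hpne
    have hqne : α.q ≠ v0 := hv0.1 α hα
    refine ⟨hpne, hqne, liftArc_dropArc hpne hqne ?_⟩
    constructor
    · intro h; exact ⟨(α.hR v0 h).1, (α.hR v0 h).2⟩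
    · rintro ⟨h1, h2⟩; exact hv0.2 α hα h1 h2
  constructor
  · intro α hα hcq
    by_cases hpv : α.p = v0
    · exact absurd hcq (ne_of_lt (hq α hα hpv))
    · obtain ⟨hp, hq', hld⟩ := pull α hα hpv
      have hmem' : dropArc v0 α hp hq' ∈ liftArc v0 ⁻¹' D := by
        rw [Set.mem_preimage, hld]; exact hα
      apply hu.1 _ hmem'
      apply Fin.succAbove_right_injective (p := v0)
      rw [dropArc_q, hcq]
  · intro α hα h1 h2
    by_cases hpv : α.p = v0
    · exact absurd (lt_trans h2 (hq α hα hpv)) (lt_irrefl _)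
    · obtain ⟨hp, hq', hld⟩ := pull α hα hpv
      have hmem' : dropArc v0 α hp hq' ∈ liftArc v0 ⁻¹' D := by
        rw [Set.mem_preimage, hld]; exact hα
      have hb1 : (dropArc v0 α hp hq').p < u' := by
        rw [← Fin.succAbove_lt_succAbove_iff (p := v0), dropArc_p]; exact h1
      have hb2 : u' < (dropArc v0 α hp hq').q := by
        rw [← Fin.succAbove_lt_succAbove_iff (p := v0), dropArc_q]; exact h2
      have := hu.2 _ hmem' hb1 hb2
      rw [mem_dropArc] at this
      exact this

theorem gc_arc_R_empty {D : Set (Arc (m+1))} (hNC : IsNCAD D) {v0 : Fin (m+1)}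
    (hgc : IsGC D v0) {β : Arc (m+1)} (hβ : β ∈ D) (hβp : β.p = v0) : β.R = ∅ := by
  by_contra hne
  have hnonempty : β.R.Nonempty := Finset.nonempty_iff_ne_empty.2 hne
  set x := β.R.min' hnonempty with hx
  have hxR : x ∈ β.R := β.R.min'_mem hnonempty
  have hmin : ∀ y ∈ β.R, x ≤ y := fun y hy => β.R.min'_le y hy
  have hb := β.hR x hxR
  have hv0x : v0 < x := by rw [← hβp]; exact hb.1
  have hv0cand := hgc.1
  rw [mem_candSet] at hv0cand
  have hxc : x ∈ candSet D := by
    rw [mem_candSet]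
    constructor
    · intro γ hγ hγq
      have hγβ : γ ≠ β := by
        intro h; subst h; rw [hγq] at hb; exact absurd hb.2 (lt_irrefl _)
      have hcomp := hNC β hβ γ hγ (Ne.symm hγβ)
      rcases lt_trichotomy γ.p v0 with hc | hc | hc
      · apply hcomp.2.2
        refine ⟨v0, x, max_le (le_of_eq hβp) (le_of_lt hc), hv0x,
          le_min (le_of_lt hb.2) (le_of_eq hγq.symm), ?_⟩
        rw [Arc.sgn_eq_zero (Or.inl hβp.symm), Arc.sgn_eq_one hxR,
          Arc.sgn_eq_one (hv0cand.2 γ hγ hc (by rw [hγq]; exact hv0x)),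
          Arc.sgn_eq_zero (Or.inr hγq.symm)]
        norm_num
      · exact hcomp.1 (hβp.trans hc.symm)
      · have hγpx : γ.p < x := by rw [← hγq]; exact γ.hpq
        have hγpnR : γ.p ∉ β.R := fun h => absurd (lt_of_le_of_lt (hmin _ h) hγpx) (lt_irrefl _)
        apply hcomp.2.2
        refine ⟨γ.p, x, max_le (le_of_lt (by rw [hβp]; exact hc)) (le_refl _), hγpx,
          le_min (le_of_lt hb.2) (le_of_eq hγq.symm), ?_⟩
        rw [Arc.sgn_eq_neg_one (by
            rintro (h | h)
            · rw [hβp] at h; exact absurd hc (h ▸ lt_irrefl _)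
            · exact absurd hb.2 (h ▸ not_lt_of_gt hγpx)) hγpnR,
          Arc.sgn_eq_zero (Or.inl rfl), Arc.sgn_eq_one hxR,
          Arc.sgn_eq_zero (Or.inr hγq.symm)]
        norm_num
    · intro δ hδ h1 h2
      by_contra hnR
      have hδβ : δ ≠ β := by
        intro h; subst h; exact hnR hxR
      have hcomp := hNC β hβ δ hδ (Ne.symm hδβ)
      have hsx : δ.sgn x = -1 :=
        Arc.sgn_eq_neg_one (by
          rintro (h | h)
          · exact absurd h1 (h ▸ lt_irrefl _)
          · exact absurd h2 (h ▸ lt_irrefl _)) hnR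
      rcases lt_trichotomy δ.p v0 with hc | hc | hc
      · apply hcomp.2.2
        refine ⟨v0, x, max_le (le_of_eq hβp) (le_of_lt hc), hv0x,
          le_min (le_of_lt hb.2) (le_of_lt h2), ?_⟩
        rw [Arc.sgn_eq_zero (Or.inl hβp.symm), Arc.sgn_eq_one hxR,
          Arc.sgn_eq_one (hv0cand.2 δ hδ hc (lt_trans hv0x h2)), hsx]
        norm_num
      · exact hcomp.1 (hβp.trans hc.symm)
      · have hδpnR : δ.p ∉ β.R := fun h => absurd (lt_of_le_of_lt (hmin _ h) h1) (lt_irrefl _)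
        apply hcomp.2.2
        refine ⟨δ.p, x, max_le (le_of_lt (by rw [hβp]; exact hc)) (le_refl _), h1,
          le_min (le_of_lt hb.2) (le_of_lt h2), ?_⟩
        rw [Arc.sgn_eq_neg_one (by
            rintro (h | h)
            · rw [hβp] at h; exact absurd hc (h ▸ lt_irrefl _)
            · exact absurd hb.2 (h ▸ not_lt_of_gt h1)) hδpnR,
          Arc.sgn_eq_zero (Or.inl rfl), Arc.sgn_eq_one hxR, hsx]
        norm_num
  exact absurd (hgc.2 x hxc) (not_le_of_gt hv0x)

theorem cand_drop_of_top {D : Set (Arc (m+1))} (hNC : IsNCAD D) {v0 : Fin (m+1)}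
    (hgc : IsGC D v0) {β : Arc (m+1)} (hβ : β ∈ D) (hβp : β.p = v0) {w' : Fin m}
    (hw : v0.succAbove w' = β.q) : w' ∈ candSet (liftArc v0 ⁻¹' D) := by
  have hRe := gc_arc_R_empty hNC hgc hβ hβp
  have hv0cand := hgc.1
  rw [mem_candSet] at hv0cand
  rw [mem_candSet]
  constructor
  · intro α' hα' hcq
    have hα : liftArc v0 α' ∈ D := hα'
    have hne : liftArc v0 α' ≠ β := by
      intro h
      have : (liftArc v0 α').p = v0 := by rw [h, hβp]
      exact Fin.succAbove_ne v0 α'.p this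
    have hcomp := hNC _ hα β hβ hne
    apply hcomp.2.1
    rw [liftArc_q, hcq, hw]
  · intro α' hα' h1 h2
    have hα : liftArc v0 α' ∈ D := hα'
    have hne : liftArc v0 α' ≠ β := by
      intro h
      have : (liftArc v0 α').p = v0 := by rw [h, hβp]
      exact Fin.succAbove_ne v0 α'.p this
    have hcomp := hNC β hβ _ hα (Ne.symm hne)
    have hb1 : (liftArc v0 α').p < β.q := by
      rw [liftArc_p, ← hw]; exact Fin.succAbove_lt_succAbove_iff.2 h1
    have hb2 : β.q < (liftArc v0 α').q := by
      rw [liftArc_q, ← hw]; exact Fin.succAbove_lt_succAbove_iff.2 h2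
    have hv0βq : v0 < β.q := by rw [← hβp]; exact β.hpq
    rw [← succAbove_mem_liftR (v0 := v0) (α := α'), hw]
    by_contra hnR
    have hsq : (liftArc v0 α').sgn β.q = -1 :=
      Arc.sgn_eq_neg_one (by
        rintro (h | h)
        · rw [h] at hb1; exact absurd hb1 (lt_irrefl _)
        · rw [h] at hb2; exact absurd hb2 (lt_irrefl _)) hnR
    have hpne : (liftArc v0 α').p ≠ v0 := by rw [liftArc_p]; exact Fin.succAbove_ne v0 α'.p
    rcases lt_or_gt_of_ne hpne with hc | hc
    · apply hcomp.2.2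
      refine ⟨v0, β.q, max_le (le_of_eq hβp) (le_of_lt hc), hv0βq,
        le_min (le_refl _) (le_of_lt hb2), ?_⟩
      rw [Arc.sgn_eq_zero (Or.inl hβp.symm), Arc.sgn_eq_zero (Or.inr rfl),
        Arc.sgn_eq_one (hv0cand.2 _ hα hc (lt_trans hv0βq hb2)), hsq]
      norm_num
    · apply hcomp.2.2
      refine ⟨(liftArc v0 α').p, β.q,
        max_le (le_of_lt (by rw [hβp]; exact hc)) (le_refl _), hb1,
        le_min (le_refl _) (le_of_lt hb2), ?_⟩
      rw [Arc.sgn_eq_neg_one (by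
          rintro (h | h)
          · exact hpne (h.trans hβp)
          · rw [h] at hb1; exact absurd hb1 (lt_irrefl _))
          (by rw [hRe]; exact Finset.notMem_empty _),
        Arc.sgn_eq_zero (Or.inl rfl), Arc.sgn_eq_zero (Or.inr rfl), hsq]
      norm_num

end GC

section Main
variable {m : ℕ}

theorem gc_top_isGC {D : Set (Arc (m+1))} (hNC : IsNCAD D) {v0 : Fin (m+1)}
    (hgc : IsGC D v0) {β : Arc (m+1)} (hβ : β ∈ D) (hβp : β.p = v0) {w' : Fin m}
    (hw' : v0.succAbove w' = β.q) : IsGC (liftArc v0 ⁻¹' D) w' := by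
  refine ⟨cand_drop_of_top hNC hgc hβ hβp hw', ?_⟩
  intro u' hu'
  by_contra hgt
  push_neg at hgt
  have hlt : β.q < v0.succAbove u' := by
    rw [← hw']; exact Fin.succAbove_lt_succAbove_iff.2 hgt
  have hcq : ∀ γ ∈ D, γ.p = v0 → γ.q < v0.succAbove u' := by
    intro γ hγ hγp
    have hγβ : γ = β := by
      by_contra hne
      exact (hNC γ hγ β hβ hne).1 (hγp.trans hβp.symm)
    rw [hγβ]; exact hlt
  have hcand := cand_of_lift hgc.1 hcq hu'
  have hle := hgc.2 _ hcand
  have hv0lt : v0 < v0.succAbove u' := by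
    refine lt_trans ?_ hlt
    rw [← hβp]; exact β.hpq
  exact absurd hle (not_le_of_gt hv0lt)

theorem diagram_injective : ∀ {N : ℕ} (π σ : Equiv.Perm (Fin N)),
    diagram π = diagram σ → π = σ := by
  intro N
  induction N with
  | zero =>
    intro π σ _
    ext x
    exact x.elim0
  | succ m IH =>
    intro π σ hD
    have hgc1 := last_isGC π
    have hgc2 := last_isGC σ
    rw [hD] at hgc1
    have hv0 : π (Fin.last m) = σ (Fin.last m) := hgc1.unique hgc2
    obtain ⟨π', hπ'⟩ := exists_extPerm π
    obtain ⟨σ', hσ'⟩ := exists_extPerm σ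
    rw [← hv0] at hσ'
    set v0 := π (Fin.last m) with hv0def
    have key : ∀ (τ' ρ' : Equiv.Perm (Fin m)),
        diagram (extPerm v0 τ') = diagram (extPerm v0 ρ') →
        diagram τ' ⊆ diagram ρ' := by
      intro τ' ρ' h α' hα'
      have h2 := lift_mem_diagram v0 τ' hα'
      rw [h] at h2
      rcases mem_diagram_ext v0 ρ' h2 with ⟨β', hβ', heq⟩ | ⟨k, hk, hd, hp, -, -⟩
      · have := liftArc_injective v0 heq
        rwa [this]
      · rw [liftArc_p] at hp
        exact absurd hp (Fin.succAbove_ne v0 α'.p)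
    have hDD : diagram (extPerm v0 π') = diagram (extPerm v0 σ') := by
      rw [← hπ', ← hσ']; exact hD
    have : π' = σ' := IH π' σ' (Set.Subset.antisymm (key π' σ' hDD) (key σ' π' hDD.symm))
    rw [hπ', hσ', this]

theorem diagram_surjective : ∀ {N : ℕ} (D : Set (Arc N)),
    IsNCAD D → ∃ π : Equiv.Perm (Fin N), diagram π = D := by
  intro N
  induction N with
  | zero =>
    intro D hNC
    refine ⟨1, Set.ext fun α => α.p.elim0⟩
  | succ m IH =>
    intro D hNC
    obtain ⟨v0, hgc⟩ := exists_isGC D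
    set D' := liftArc v0 ⁻¹' D with hD'
    have hNC' : IsNCAD D' := by
      intro a ha b hb hab
      have hcomp := hNC _ ha _ hb (fun h => hab (liftArc_injective v0 h))
      refine ⟨fun h => hcomp.1 ?_, fun h => hcomp.2.1 ?_, fun h => hcomp.2.2 (crosses_liftArc h)⟩
      · rw [liftArc_p, liftArc_p, h]
      · rw [liftArc_q, liftArc_q, h]
    obtain ⟨π', hπ'⟩ := IH D' hNC'
    refine ⟨extPerm v0 π', ?_⟩
    have hv0cs := mem_candSet.1 hgc.1
    apply Set.Subset.antisymm
    · intro α hα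
      rcases mem_diagram_ext v0 π' hα with ⟨α', hα', rfl⟩ | ⟨k, hk, hd, hp, hq, hR⟩
      · rw [hπ'] at hα'; exact hα'
      · obtain ⟨m'', rfl⟩ : ∃ m'', m = m'' + 1 := ⟨(k : ℕ), by omega⟩
        have hkl : k = Fin.last m'' := Fin.ext (by rw [Fin.val_last]; omega)
        have hgc' := last_isGC π'
        rw [hπ'] at hgc'
        by_cases hex : ∃ β ∈ D, β.p = v0
        · obtain ⟨β, hβ, hβp⟩ := hex
          have hqne : β.q ≠ v0 := hv0cs.1 β hβ
          obtain ⟨w', hw'⟩ := Fin.exists_succAbove_eq hqne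
          have hwgc := gc_top_isGC hNC hgc hβ hβp hw'
          have hπk : π' k = w' := by
            rw [hkl]; exact hgc'.unique hwgc
          have hqeq : α.q = β.q := by rw [hq, hπk, hw']
          have hRe : β.R = ∅ := gc_arc_R_empty hNC hgc hβ hβp
          have heq : α = β := Arc.ext' (hp.trans hβp.symm) hqeq (by rw [hR, hRe])
          rw [heq]; exact hβ
        · push_neg at hex
          exfalso
          have hcq : ∀ γ ∈ D, γ.p = v0 → γ.q < v0.succAbove (π' k) :=
            fun γ hγ hγp => absurd hγp (hex γ hγ)
          have hkc : π' k ∈ candSet D' := by rw [hkl]; exact hgc'.1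
          have hcand := cand_of_lift hgc.1 hcq hkc
          exact absurd (hgc.2 _ hcand) (not_le_of_gt hd)
    · intro β hβ
      by_cases hpv : β.p = v0
      · have hRe : β.R = ∅ := gc_arc_R_empty hNC hgc hβ hpv
        have hqne : β.q ≠ v0 := hv0cs.1 β hβ
        obtain ⟨w', hw'⟩ := Fin.exists_succAbove_eq hqne
        cases m with
        | zero =>
          exfalso
          have h1 := β.hpq
          have h2 : β.p = β.q := by
            apply Fin.ext
            have := β.p.isLt
            have := β.q.isLt
            omega
          rw [h2] at h1
          exact absurd h1 (lt_irrefl _)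
        | succ m'' =>
          have hwgc := gc_top_isGC hNC hgc hβ hpv hw'
          have hgc' := last_isGC π'
          rw [hπ'] at hgc'
          set k : Fin (m'' + 1) := Fin.last m'' with hkdef
          have hk : (k : ℕ) + 1 = m'' + 1 := by rw [hkdef, Fin.val_last]
          have hπk : π' k = w' := hgc'.unique hwgc
          have hd : v0 < v0.succAbove (π' k) := by
            rw [hπk, hw', ← hpv]; exact β.hpq
          have hmem := lastArc_mem_diagram v0 π' k hk hd
          have heq : β = (⟨v0, v0.succAbove (π' k), ∅, hd, by simp⟩ : Arc (m'' + 1 + 1)) :=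
            Arc.ext' hpv (by show β.q = v0.succAbove (π' k); rw [hπk, hw']) hRe
          rw [heq]; exact hmem
      · have hqne : β.q ≠ v0 := hv0cs.1 β hβ
        have hmemiff : v0 ∈ β.R ↔ (β.p < v0 ∧ v0 < β.q) :=
          ⟨fun h => ⟨(β.hR v0 h).1, (β.hR v0 h).2⟩, fun h => hv0cs.2 β hβ h.1 h.2⟩
        have hld := liftArc_dropArc hpv hqne hmemiff
        have hmem' : dropArc v0 β hpv hqne ∈ D' := by
          rw [hD', Set.mem_preimage, hld]; exact hβ
        rw [← hπ'] at hmem'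
        have := lift_mem_diagram v0 π' hmem'
        rwa [hld] at this

end Main


/-- Identifying `B_n` with the permutations of `2n` points fixed by conjugation by
`w₀`, the map `δ` restricts to a bijection from `B_n` to the set of centrally
symmetric noncrossing arc diagrams on `2n` points. -/
theorem stmt10 (n : ℕ) :
    (∀ π : Equiv.Perm (Fin (2 * n)), Fin.revPerm * π * Fin.revPerm = π →
        IsNCAD (diagram π) ∧ CentSym (diagram π)) ∧
    (∀ π σ : Equiv.Perm (Fin (2 * n)),
        Fin.revPerm * π * Fin.revPerm = π → Fin.revPerm * σ * Fin.revPerm = σ →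
        diagram π = diagram σ → π = σ) ∧
    (∀ D : Set (Arc (2 * n)), IsNCAD D → CentSym D →
        ∃ π : Equiv.Perm (Fin (2 * n)),
          Fin.revPerm * π * Fin.revPerm = π ∧ diagram π = D) := by
  refine ⟨?_, ?_, ?_⟩
  · intro π hπ
    exact ⟨isNCAD_diagram π, centSym_diagram hπ⟩
  · intro π σ _ _ h
    exact diagram_injective π σ h
  · intro D hNC hCS
    obtain ⟨π, hπ⟩ := diagram_surjective D hNC
    refine ⟨π, ?_, hπ⟩
    apply diagram_injective
    rw [diagram_conj π, hπ]
    ext α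
    simp only [Set.mem_setOf_eq]
    exact (hCS α).symm
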